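/- For a > 0, define for s ∈ ℝ: y₀(a,s) = a + ∫₀^s cosh(2a)·sinh(2t)·(cosh²(2a)·cosh²(2t) − 1)^{−1/2} dt and Λ₀(a,s) = √2·sinh(2a)·∫₀^s (cosh(2a)·cosh(2t) − 1)^{1/2}·(cosh²(2a)·cosh²(2t) − 1)^{−1} dt. Then: (1) y₀(a,·) is an even function of s and Λ₀(a,·) is an odd function of s; (2) cosh(2·y₀(a,s)) = cosh(2a)·cosh(2s) for all s ∈ ℝ; (3) for s ≥ 0, Λ₀(a,s) = λ₀(a, y₀(a,s)), where λ₀(a,ρ) = sinh(2a)·∫_a^ρ (cosh τ)^{−1}·(sinh²(2τ) − sinh²(2a))^{−1/2} dτ for ρ ≥ a. -/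

import Mathlib

open Real MeasureTheory Set Filter Topology

lemma sinh_sub_sinh' (x y : ℝ) :
    Real.sinh x - Real.sinh y = 2 * Real.cosh ((x+y)/2) * Real.sinh ((x-y)/2) := by
  have h1 := Real.sinh_add ((x+y)/2) ((x-y)/2)
  have h2 := Real.sinh_sub ((x+y)/2) ((x-y)/2)
  have e1 : (x+y)/2 + (x-y)/2 = x := by ring
  have e2 : (x+y)/2 - (x-y)/2 = y := by ring
  rw [e1] at h1; rw [e2] at h2
  linear_combination h1 - h2

lemma G_pos {a : ℝ} (ha : 0 < a) (t : ℝ) :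
    0 < Real.cosh (2*a) ^ 2 * Real.cosh (2*t) ^ 2 - 1 := by
  have h1 : 1 < Real.cosh (2*a) := Real.one_lt_cosh.2 (by positivity)
  have h2 : 1 ≤ Real.cosh (2*t) := Real.one_le_cosh _
  have h1' : 1 < Real.cosh (2*a) ^ 2 := by nlinarith
  have h2' : 1 ≤ Real.cosh (2*t) ^ 2 := by nlinarith
  nlinarith [mul_le_mul_of_nonneg_left h2' (le_of_lt (lt_trans one_pos h1'))]

lemma C_lt {a : ℝ} (ha : 0 < a) (t : ℝ) : 1 < Real.cosh (2*a) * Real.cosh (2*t) := by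
  have h1 : 1 < Real.cosh (2*a) := Real.one_lt_cosh.2 (by positivity)
  have h2 : 1 ≤ Real.cosh (2*t) := Real.one_le_cosh _
  nlinarith

noncomputable def f1 (a t : ℝ) : ℝ :=
  Real.cosh (2*a) * Real.sinh (2*t) *
    (Real.cosh (2*a) ^ 2 * Real.cosh (2*t) ^ 2 - 1) ^ (-(1:ℝ)/2)

noncomputable def f2 (a t : ℝ) : ℝ :=
  (Real.cosh (2*a) * Real.cosh (2*t) - 1) ^ ((1:ℝ)/2) *
    (Real.cosh (2*a) ^ 2 * Real.cosh (2*t) ^ 2 - 1)⁻¹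

noncomputable def gg (a τ : ℝ) : ℝ :=
  (Real.cosh τ)⁻¹ * (Real.sinh (2*τ) ^ 2 - Real.sinh (2*a) ^ 2) ^ (-(1:ℝ)/2)

noncomputable def FF (a s : ℝ) : ℝ :=
  (1/2) * Real.arsinh (Real.sqrt (Real.cosh (2*a) ^ 2 * Real.cosh (2*s) ^ 2 - 1))

lemma hasDerivAt_FF {a : ℝ} (ha : 0 < a) (t : ℝ) :
    HasDerivAt (FF a) (f1 a t) t := by
  have hGpos := G_pos ha t
  have h2t : HasDerivAt (fun s : ℝ => 2*s) 2 t := by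
    simpa using (hasDerivAt_id t).const_mul 2
  have hcosh : HasDerivAt (fun s => Real.cosh (2*s)) (Real.sinh (2*t) * 2) t :=
    (Real.hasDerivAt_cosh (2*t)).comp t h2t
  have hG : HasDerivAt (fun s => Real.cosh (2*a) ^ 2 * Real.cosh (2*s) ^ 2 - 1)
      (Real.cosh (2*a) ^ 2 * (2 * Real.cosh (2*t) * (Real.sinh (2*t) * 2))) t := by
    have := ((hcosh.pow 2).const_mul (Real.cosh (2*a) ^ 2)).sub_const 1
    simpa [pow_one, mul_assoc, mul_comm, mul_left_comm] using this
  have hsqrt := hG.sqrt (ne_of_gt hGpos)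
  have harsinh := ((Real.hasDerivAt_arsinh _).comp t hsqrt).const_mul (1/2 : ℝ)
  have hsq : Real.sqrt (Real.cosh (2*a) ^ 2 * Real.cosh (2*t) ^ 2 - 1) ^ 2
      = Real.cosh (2*a) ^ 2 * Real.cosh (2*t) ^ 2 - 1 := Real.sq_sqrt hGpos.le
  have h1G : 1 + (Real.cosh (2*a) ^ 2 * Real.cosh (2*t) ^ 2 - 1)
      = (Real.cosh (2*a) * Real.cosh (2*t))^2 := by ring
  have hrp : (Real.cosh (2*a) ^ 2 * Real.cosh (2*t) ^ 2 - 1) ^ (-(1:ℝ)/2)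
      = (Real.sqrt (Real.cosh (2*a) ^ 2 * Real.cosh (2*t) ^ 2 - 1))⁻¹ := by
    rw [neg_div, Real.rpow_neg hGpos.le, ← Real.sqrt_eq_rpow]
  have hsp : 0 < Real.sqrt (Real.cosh (2*a) ^ 2 * Real.cosh (2*t) ^ 2 - 1) :=
    Real.sqrt_pos.2 hGpos
  have hcosht : 0 < Real.cosh (2*t) := Real.cosh_pos _
  have hcosha : 0 < Real.cosh (2*a) := Real.cosh_pos _
  have hval : (1:ℝ)/2 *
      ((Real.sqrt (1 + Real.sqrt (Real.cosh (2*a) ^ 2 * Real.cosh (2*t) ^ 2 - 1) ^ 2))⁻¹ *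
        (Real.cosh (2*a) ^ 2 * (2 * Real.cosh (2*t) * (Real.sinh (2*t) * 2)) /
          (2 * Real.sqrt (Real.cosh (2*a) ^ 2 * Real.cosh (2*t) ^ 2 - 1))))
      = f1 a t := by
    rw [hsq, h1G, Real.sqrt_sq (by positivity), f1, hrp]
    field_simp
  rw [hval] at harsinh
  exact harsinh

lemma cont_f1 {a : ℝ} (ha : 0 < a) : Continuous (f1 a) := by
  have hG : Continuous (fun t : ℝ => Real.cosh (2*a) ^ 2 * Real.cosh (2*t) ^ 2 - 1) := by
    fun_prop
  exact (continuous_const.mul (by fun_prop)).mul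
    (hG.rpow_const fun x => Or.inl (ne_of_gt (G_pos ha x)))

lemma cont_f2 {a : ℝ} (ha : 0 < a) : Continuous (f2 a) := by
  have hG : Continuous (fun t : ℝ => Real.cosh (2*a) ^ 2 * Real.cosh (2*t) ^ 2 - 1) := by
    fun_prop
  have hB : Continuous (fun t : ℝ => Real.cosh (2*a) * Real.cosh (2*t) - 1) := by fun_prop
  exact (hB.rpow_const fun x => Or.inr (by norm_num)).mul
    (hG.inv₀ fun x => ne_of_gt (G_pos ha x))

lemma cont_gg {a : ℝ} (ha : 0 < a) : ContinuousOn (gg a) (Ioi a) := by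
  have hbase : ∀ x ∈ Ioi a, 0 < Real.sinh (2*x) ^ 2 - Real.sinh (2*a) ^ 2 := by
    intro x hx
    have hx' : a < x := hx
    have h1 : Real.sinh (2*a) < Real.sinh (2*x) := Real.sinh_lt_sinh.2 (by linarith)
    have h2 : 0 < Real.sinh (2*a) := Real.sinh_pos_iff.2 (by positivity)
    nlinarith
  apply ContinuousOn.mul
  · exact (Real.continuous_cosh.continuousOn).inv₀ fun x _ => (Real.cosh_pos x).ne'
  · exact ContinuousOn.rpow_const (by fun_prop) fun x hx => Or.inl (ne_of_gt (hbase x hx))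

lemma gg_integrable {a b : ℝ} (ha : 0 < a) (hab : a ≤ b) :
    IntervalIntegrable (gg a) volume a b := by
  have hs2a : 0 < Real.sinh (2*a) := Real.sinh_pos_iff.2 (by positivity)
  set K : ℝ := (4*Real.sinh (2*a)) ^ (-(1:ℝ)/2) with hK
  have hmint : IntervalIntegrable (fun τ => K * (τ - a) ^ (-(1:ℝ)/2)) volume a b := by
    have h1 : IntervalIntegrable (fun x : ℝ => x ^ (-(1:ℝ)/2)) volume 0 (b - a) :=
      intervalIntegral.intervalIntegrable_rpow' (by norm_num)
    have h2 := h1.comp_sub_right a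
    simpa using h2.const_mul K
  apply hmint.mono_fun
  · rw [uIoc_of_le hab]
    exact ((cont_gg ha).mono Ioc_subset_Ioi_self).aestronglyMeasurable measurableSet_Ioc
  · rw [uIoc_of_le hab]
    filter_upwards [MeasureTheory.ae_restrict_mem measurableSet_Ioc] with τ hτ
    have hτa : 0 < τ - a := by
      have := hτ.1; simp only [mem_Ioc] at hτ; linarith [hτ.1]
    have hss := sinh_sub_sinh' (2*τ) (2*a)
    have e1 : (2*τ + 2*a)/2 = τ + a := by ring
    have e2 : (2*τ - 2*a)/2 = τ - a := by ring
    rw [e1, e2] at hss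
    have h7 : 2*(τ - a) ≤ Real.sinh (2*τ) - Real.sinh (2*a) := by
      rw [hss]
      nlinarith [Real.one_le_cosh (τ + a), Real.self_le_sinh_iff.2 hτa.le, hτa.le]
    have h8 : 2*Real.sinh (2*a) ≤ Real.sinh (2*τ) + Real.sinh (2*a) := by
      have := Real.sinh_lt_sinh.2 (show 2*a < 2*τ by linarith)
      linarith
    have h9 : (2*(τ - a)) * (2*Real.sinh (2*a)) ≤
        (Real.sinh (2*τ) - Real.sinh (2*a)) * (Real.sinh (2*τ) + Real.sinh (2*a)) :=
      mul_le_mul h7 h8 (by positivity) (le_trans (by positivity) h7)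
    have hX : 4*Real.sinh (2*a)*(τ - a) ≤ Real.sinh (2*τ) ^ 2 - Real.sinh (2*a) ^ 2 := by
      nlinarith [h9]
    have hXpos : 0 < Real.sinh (2*τ) ^ 2 - Real.sinh (2*a) ^ 2 :=
      lt_of_lt_of_le (by positivity) hX
    have hr1 : (Real.sinh (2*τ) ^ 2 - Real.sinh (2*a) ^ 2) ^ (-(1:ℝ)/2)
        ≤ (4*Real.sinh (2*a)*(τ - a)) ^ (-(1:ℝ)/2) :=
      Real.rpow_le_rpow_of_nonpos (by positivity) hX (by norm_num)
    have hsplit : (4*Real.sinh (2*a)*(τ - a)) ^ (-(1:ℝ)/2)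
        = K * (τ - a) ^ (-(1:ℝ)/2) := by
      rw [hK, ← Real.mul_rpow (by positivity) hτa.le]
    have hg0 : 0 ≤ gg a τ :=
      mul_nonneg (by positivity) (Real.rpow_nonneg hXpos.le _)
    have hm0 : (0:ℝ) ≤ K * (τ - a) ^ (-(1:ℝ)/2) :=
      mul_nonneg (Real.rpow_nonneg (by positivity) _) (Real.rpow_nonneg hτa.le _)
    rw [Real.norm_eq_abs, Real.norm_eq_abs, abs_of_nonneg hg0, abs_of_nonneg hm0]
    calc gg a τ ≤ (Real.sinh (2*τ) ^ 2 - Real.sinh (2*a) ^ 2) ^ (-(1:ℝ)/2) := by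
          rw [gg]
          exact mul_le_of_le_one_left (Real.rpow_nonneg hXpos.le _)
            (inv_le_one_of_one_le₀ (Real.one_le_cosh τ))
      _ ≤ (4*Real.sinh (2*a)*(τ - a)) ^ (-(1:ℝ)/2) := hr1
      _ = K * (τ - a) ^ (-(1:ℝ)/2) := hsplit

lemma cont_FF (a : ℝ) : Continuous (FF a) := by
  unfold FF
  exact continuous_const.mul (Real.continuous_arsinh.comp
    (Real.continuous_sqrt.comp (by fun_prop)))

set_option maxHeartbeats 2000000 in
/-- Arc-length parametrization of the catenaries generating the minimal catenoids in `ℍ³`: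
`y₀(a,·)` is even, `Λ₀(a,·)` is odd, `cosh(2y₀(a,s)) = cosh(2a)cosh(2s)`, and for `s ≥ 0`,
`Λ₀(a,s) = λ₀(a, y₀(a,s))`. -/
theorem stmt14 (a : ℝ) (ha : 0 < a)
    (y₀ Λ₀ lam : ℝ → ℝ)
    (hy : ∀ s, y₀ s = a + ∫ t in (0:ℝ)..s,
      Real.cosh (2*a) * Real.sinh (2*t) *
        (Real.cosh (2*a) ^ 2 * Real.cosh (2*t) ^ 2 - 1) ^ (-(1:ℝ)/2))
    (hΛ : ∀ s, Λ₀ s = Real.sqrt 2 * Real.sinh (2*a) * ∫ t in (0:ℝ)..s,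
      (Real.cosh (2*a) * Real.cosh (2*t) - 1) ^ ((1:ℝ)/2) *
        (Real.cosh (2*a) ^ 2 * Real.cosh (2*t) ^ 2 - 1)⁻¹)
    (hlam : ∀ ρ, lam ρ = Real.sinh (2*a) * ∫ τ in a..ρ,
      (Real.cosh τ)⁻¹ * (Real.sinh (2*τ) ^ 2 - Real.sinh (2*a) ^ 2) ^ (-(1:ℝ)/2)) :
    (∀ s, y₀ (-s) = y₀ s) ∧
    (∀ s, Λ₀ (-s) = -Λ₀ s) ∧
    (∀ s, Real.cosh (2 * y₀ s) = Real.cosh (2*a) * Real.cosh (2*s)) ∧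
    (∀ s, 0 ≤ s → Λ₀ s = lam (y₀ s)) := by
  have hy' : ∀ u, y₀ u = a + ∫ t in (0:ℝ)..u, f1 a t := by
    intro u; rw [hy u]; rfl
  have hΛ' : ∀ u, Λ₀ u = Real.sqrt 2 * Real.sinh (2*a) * ∫ t in (0:ℝ)..u, f2 a t := by
    intro u; rw [hΛ u]; rfl
  have hlam' : ∀ ρ, lam ρ = Real.sinh (2*a) * ∫ τ in a..ρ, gg a τ := by
    intro ρ; rw [hlam ρ]; rfl
  -- `y₀` equals the explicit formula `FF a`
  have hyF : ∀ u, y₀ u = FF a u := by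
    intro u
    rw [hy' u, intervalIntegral.integral_eq_sub_of_hasDerivAt
      (fun t _ => hasDerivAt_FF ha t) ((cont_f1 ha).intervalIntegrable 0 u)]
    have hFF0 : FF a 0 = a := by
      have h0 : Real.cosh (2*a) ^ 2 * Real.cosh (2*(0:ℝ)) ^ 2 - 1 = Real.sinh (2*a) ^ 2 := by
        rw [mul_zero, Real.cosh_zero, Real.sinh_sq]; ring
      rw [FF, h0, Real.sqrt_sq (le_of_lt (Real.sinh_pos_iff.2 (by positivity))),
        Real.arsinh_sinh]
      ring
    rw [hFF0]; ring
  -- part (3)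
  have h3 : ∀ u, Real.cosh (2 * y₀ u) = Real.cosh (2*a) * Real.cosh (2*u) := by
    intro u
    rw [hyF u, FF,
      show 2 * ((1:ℝ)/2 * Real.arsinh
        (Real.sqrt (Real.cosh (2*a) ^ 2 * Real.cosh (2*u) ^ 2 - 1)))
        = Real.arsinh (Real.sqrt (Real.cosh (2*a) ^ 2 * Real.cosh (2*u) ^ 2 - 1)) from by ring,
      Real.cosh_arsinh, Real.sq_sqrt (G_pos ha u).le,
      show 1 + (Real.cosh (2*a) ^ 2 * Real.cosh (2*u) ^ 2 - 1)
        = (Real.cosh (2*a) * Real.cosh (2*u))^2 from by ring,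
      Real.sqrt_sq (by positivity)]
  -- part (1)
  have part1 : ∀ u, y₀ (-u) = y₀ u := by
    intro u
    rw [hyF, hyF]
    simp only [FF]
    rw [show (2:ℝ) * -u = -(2*u) from by ring, Real.cosh_neg]
  -- part (2)
  have part2 : ∀ u, Λ₀ (-u) = -Λ₀ u := by
    intro u
    rw [hΛ' (-u), hΛ' u]
    have heven : ∀ x : ℝ, f2 a (-x) = f2 a x := by
      intro x; rw [f2, f2, show (2:ℝ) * -x = -(2*x) from by ring, Real.cosh_neg]
    have h1 : (∫ t in (0:ℝ)..(-u), f2 a t) = -∫ t in (0:ℝ)..u, f2 a t := by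
      have h2 := intervalIntegral.integral_comp_neg (a := (0:ℝ)) (b := u) (f := f2 a)
      simp only [neg_zero] at h2
      have hco : (∫ x in (0:ℝ)..u, f2 a (-x)) = ∫ x in (0:ℝ)..u, f2 a x :=
        intervalIntegral.integral_congr fun x _ => heven x
      rw [hco] at h2
      rw [intervalIntegral.integral_symm, ← h2]
    rw [h1]; ring
  refine ⟨part1, part2, h3, ?_⟩
  -- part (4)
  have hy0a : y₀ 0 = a := by
    rw [hy' 0, intervalIntegral.integral_same, add_zero]
  have hy0nonneg : ∀ t, 0 ≤ y₀ t := by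
    intro t
    rw [hyF t, FF]
    have h := Real.arsinh_nonneg_iff.2 (Real.sqrt_nonneg
      (Real.cosh (2*a) ^ 2 * Real.cosh (2*t) ^ 2 - 1))
    linarith
  have hmono : ∀ t₁ t₂, 0 ≤ t₁ → t₁ < t₂ → y₀ t₁ < y₀ t₂ := by
    intro t₁ t₂ h1 h2
    have hcc : Real.cosh (2 * y₀ t₁) < Real.cosh (2 * y₀ t₂) := by
      rw [h3 t₁, h3 t₂]
      have hlt : Real.cosh (2*t₁) < Real.cosh (2*t₂) := by
        rw [Real.cosh_lt_cosh, abs_of_nonneg (by linarith), abs_of_nonneg (by linarith)]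
        linarith
      have := Real.cosh_pos (2*a)
      nlinarith
    have habs := Real.cosh_lt_cosh.1 hcc
    rw [abs_of_nonneg (by linarith [hy0nonneg t₁]),
      abs_of_nonneg (by linarith [hy0nonneg t₂])] at habs
    linarith
  have hcy : Continuous y₀ := by
    have hfun : y₀ = FF a := funext hyF
    rw [hfun]
    exact cont_FF a
  intro s hs
  rcases hs.eq_or_lt with h0 | hs
  · rw [← h0, hΛ' 0, intervalIntegral.integral_same, mul_zero, hy0a, hlam' a,
      intervalIntegral.integral_same, mul_zero]
  · have hab : a < y₀ s := by rw [← hy0a]; exact hmono 0 s le_rfl hs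
    have hy_le : ∀ ε, 0 < ε → ε ≤ s → a < y₀ ε ∧ y₀ ε ≤ y₀ s := by
      intro ε hε hεs
      constructor
      · rw [← hy0a]; exact hmono 0 ε le_rfl hε
      · rcases eq_or_lt_of_le hεs with h | h
        · rw [h]
        · exact (hmono ε s hε.le h).le
    have hgb : IntervalIntegrable (gg a) volume a (y₀ s) := gg_integrable ha hab.le
    -- key identity
    have key : ∀ ε ∈ Ioc (0:ℝ) s, Λ₀ s - lam (y₀ s) = Λ₀ ε - lam (y₀ ε) := by
      intro ε hε
      obtain ⟨hε0, hεs⟩ := hε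
      have huIcc : uIcc ε s = Icc ε s := uIcc_of_le hεs
      have hderiv : ∀ x ∈ uIcc ε s, HasDerivAt y₀ (f1 a x) x := by
        intro x _
        have hfun : y₀ = FF a := funext hyF
        rw [hfun]
        exact hasDerivAt_FF ha x
      have himg : y₀ '' uIcc ε s ⊆ Ioi a := by
        rintro _ ⟨x, hx, rfl⟩
        rw [huIcc] at hx
        exact (hy_le x (lt_of_lt_of_le hε0 hx.1) hx.2).1
      have hsub : (∫ x in ε..s, f1 a x * gg a (y₀ x)) = ∫ x in y₀ ε..y₀ s, gg a x := by
        have := intervalIntegral.integral_comp_smul_deriv' hderiv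
          ((cont_f1 ha).continuousOn) ((cont_gg ha).mono himg)
        simpa [Function.comp, smul_eq_mul] using this
      have hpt : ∀ x ∈ uIcc ε s, Real.sqrt 2 * f2 a x = f1 a x * gg a (y₀ x) := by
        intro x hx
        rw [huIcc] at hx
        have hx0 : 0 < x := lt_of_lt_of_le hε0 hx.1
        have hsinh2x : 0 < Real.sinh (2*x) := Real.sinh_pos_iff.2 (by positivity)
        have hC : 1 < Real.cosh (2*a) * Real.cosh (2*x) := C_lt ha x
        have hcos2y : Real.cosh (2 * y₀ x) = Real.cosh (2*a) * Real.cosh (2*x) := h3 x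
        have hcosha : 0 < Real.cosh (2*a) := Real.cosh_pos _
        have hA : Real.sinh (2 * y₀ x) ^ 2 - Real.sinh (2*a) ^ 2
            = (Real.cosh (2*a) * Real.sinh (2*x)) ^ 2 := by
          have e1 := Real.sinh_sq (2 * y₀ x)
          have e2 := Real.sinh_sq (2*a)
          have e3 := Real.sinh_sq (2*x)
          rw [e1, e2, hcos2y]
          linear_combination (-(Real.cosh (2*a))^2) * e3
        have hApow : (Real.sinh (2 * y₀ x) ^ 2 - Real.sinh (2*a) ^ 2) ^ (-(1:ℝ)/2)
            = (Real.cosh (2*a) * Real.sinh (2*x))⁻¹ := by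
          rw [hA, neg_div, Real.rpow_neg (by positivity), ← Real.sqrt_eq_rpow,
            Real.sqrt_sq (by positivity)]
        have hcoshy : Real.cosh (y₀ x)
            = Real.sqrt ((Real.cosh (2*a) * Real.cosh (2*x) + 1)/2) := by
          have h2m : Real.cosh (2 * y₀ x) = 2 * Real.cosh (y₀ x) ^ 2 - 1 := by
            rw [Real.cosh_two_mul]
            have := Real.sinh_sq (y₀ x)
            linarith
          have h4 : Real.cosh (y₀ x) ^ 2 = (Real.cosh (2*a) * Real.cosh (2*x) + 1)/2 := by
            rw [hcos2y] at h2m; linarith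
          rw [← h4, Real.sqrt_sq (Real.cosh_pos _).le]
        have hGpow : (Real.cosh (2*a) ^ 2 * Real.cosh (2*x) ^ 2 - 1) ^ (-(1:ℝ)/2)
            = (Real.sqrt (Real.cosh (2*a) ^ 2 * Real.cosh (2*x) ^ 2 - 1))⁻¹ := by
          rw [neg_div, Real.rpow_neg (G_pos ha x).le, ← Real.sqrt_eq_rpow]
        rw [f1, f2, gg, hApow, hcoshy, hGpow, ← Real.sqrt_eq_rpow]
        have hfac : Real.cosh (2*a) ^ 2 * Real.cosh (2*x) ^ 2 - 1
            = (Real.cosh (2*a) * Real.cosh (2*x) - 1)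
              * (Real.cosh (2*a) * Real.cosh (2*x) + 1) := by ring
        rw [hfac, Real.sqrt_mul (by nlinarith : (0:ℝ) ≤ Real.cosh (2*a) * Real.cosh (2*x) - 1),
          Real.sqrt_div (by nlinarith : (0:ℝ) ≤ Real.cosh (2*a) * Real.cosh (2*x) + 1) 2]
        set r := Real.sqrt (Real.cosh (2*a) * Real.cosh (2*x) - 1) with hr
        set q := Real.sqrt (Real.cosh (2*a) * Real.cosh (2*x) + 1) with hq
        have hrpos : 0 < r := Real.sqrt_pos.2 (by nlinarith)
        have hqpos : 0 < q := Real.sqrt_pos.2 (by nlinarith)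
        have hwpos : 0 < Real.sqrt 2 := by positivity
        have hr2 : r^2 = Real.cosh (2*a) * Real.cosh (2*x) - 1 := Real.sq_sqrt (by nlinarith)
        have hq2 : q^2 = Real.cosh (2*a) * Real.cosh (2*x) + 1 := Real.sq_sqrt (by nlinarith)
        have hw2 : (Real.sqrt 2)^2 = 2 := Real.sq_sqrt (by norm_num)
        rw [← hr2, ← hq2]
        have hcs : Real.cosh (2*a) * Real.sinh (2*x) ≠ 0 := by positivity
        field_simp
      have hsub2 : (∫ x in ε..s, Real.sqrt 2 * f2 a x) = ∫ x in y₀ ε..y₀ s, gg a x := by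
        rw [intervalIntegral.integral_congr hpt]
        exact hsub
      have hΛdiff : Λ₀ s - Λ₀ ε
          = Real.sqrt 2 * Real.sinh (2*a) * ∫ x in ε..s, f2 a x := by
        rw [hΛ' s, hΛ' ε, ← mul_sub,
          intervalIntegral.integral_interval_sub_left
            ((cont_f2 ha).intervalIntegrable 0 s) ((cont_f2 ha).intervalIntegrable 0 ε)]
      have hay : a ≤ y₀ ε := (hy_le ε hε0 hεs).1.le
      have hyb : y₀ ε ≤ y₀ s := (hy_le ε hε0 hεs).2
      have hgε : IntervalIntegrable (gg a) volume a (y₀ ε) := by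
        apply hgb.mono_set
        rw [uIcc_of_le hab.le, uIcc_of_le hay]
        exact Icc_subset_Icc le_rfl hyb
      have hlamdiff : lam (y₀ s) - lam (y₀ ε)
          = Real.sinh (2*a) * ∫ x in y₀ ε..y₀ s, gg a x := by
        rw [hlam' (y₀ s), hlam' (y₀ ε), ← mul_sub,
          intervalIntegral.integral_interval_sub_left hgb hgε]
      have hcomb : lam (y₀ s) - lam (y₀ ε) = Λ₀ s - Λ₀ ε := by
        rw [hlamdiff, hΛdiff, ← hsub2, intervalIntegral.integral_const_mul]
        ring
      linarith
    -- limits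
    haveI hneb : (𝓝[Ioc (0:ℝ) s] 0).NeBot := by
      apply mem_closure_iff_nhdsWithin_neBot.1
      rw [closure_Ioc hs.ne]
      exact ⟨le_rfl, hs.le⟩
    have hΛcont : Continuous Λ₀ := by
      have hfun : Λ₀ = fun u => Real.sqrt 2 * Real.sinh (2*a) * ∫ t in (0:ℝ)..u, f2 a t :=
        funext hΛ'
      rw [hfun]
      exact continuous_const.mul (intervalIntegral.continuous_primitive
        (fun u v => (cont_f2 ha).intervalIntegrable u v) 0)
    have hΛ0 : Λ₀ 0 = 0 := by rw [hΛ' 0, intervalIntegral.integral_same, mul_zero]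
    have hlimΛ : Tendsto Λ₀ (𝓝[Ioc (0:ℝ) s] 0) (𝓝 0) := by
      have := (hΛcont.tendsto 0).mono_left
        (nhdsWithin_le_nhds (s := Ioc (0:ℝ) s))
      rwa [hΛ0] at this
    have hP : ContinuousOn (fun x => ∫ t in a..x, gg a t) (uIcc a (y₀ s)) :=
      intervalIntegral.continuousOn_primitive_interval' hgb left_mem_uIcc
    have hy₀tend : Tendsto y₀ (𝓝[Ioc (0:ℝ) s] 0) (𝓝[uIcc a (y₀ s)] a) := by
      rw [tendsto_nhdsWithin_iff]
      constructor
      · have := (hcy.tendsto 0).mono_left (nhdsWithin_le_nhds (s := Ioc (0:ℝ) s))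
        rwa [hy0a] at this
      · filter_upwards [self_mem_nhdsWithin] with ε hε
        rw [uIcc_of_le hab.le]
        exact ⟨(hy_le ε hε.1 hε.2).1.le, (hy_le ε hε.1 hε.2).2⟩
    have hlimlam : Tendsto (fun ε => lam (y₀ ε)) (𝓝[Ioc (0:ℝ) s] 0) (𝓝 0) := by
      have h1 : Tendsto (fun x => ∫ t in a..x, gg a t) (𝓝[uIcc a (y₀ s)] a) (𝓝 0) := by
        have h2 := hP a left_mem_uIcc
        simpa [ContinuousWithinAt, intervalIntegral.integral_same] using h2
      have h2 := (h1.comp hy₀tend).const_mul (Real.sinh (2*a))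
      simp only [mul_zero] at h2
      refine Tendsto.congr (fun ε => ?_) h2
      exact (hlam' (y₀ ε)).symm
    have hconst : Tendsto (fun _ : ℝ => Λ₀ s - lam (y₀ s)) (𝓝[Ioc (0:ℝ) s] 0) (𝓝 0) := by
      have hdiff : Tendsto (fun ε => Λ₀ ε - lam (y₀ ε)) (𝓝[Ioc (0:ℝ) s] 0) (𝓝 0) := by
        simpa using hlimΛ.sub hlimlam
      exact Tendsto.congr'
        (by filter_upwards [self_mem_nhdsWithin] with ε hε; exact (key ε hε).symm) hdiff
    have hfin := tendsto_nhds_unique hconst tendsto_const_nhds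
    linarith
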